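/- Let c : ℤ×ℤ → ℂ be a system of Fourier coefficients for φ : ℍ × ℂ → ℂ, let t ≥ 1 and b ≥ 1 be integers, and fix integers n_b and k with 0 ≤ n_b ≤ b−1. Then for every τ in the upper half-plane, (1/b) · ∑_{j=0}^{b−1} exp(2πi·t·n_b²·τ/b²) · φ(τ, (n_b·τ + j)/b) · exp(−2πi·k·j/b) = ∑_{(n,l) ∈ ℤ×ℤ, l ≡ k (mod b)} c(n, l) · exp(2πi·(n + n_b·l/b + t·n_b²/b²)·τ), where the family on the right-hand side is summable. -/

import Mathlib

open Complex

/-- `c` is a system of Fourier coefficients for `φ`: for every `τ` in the upper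
half-plane and every `z`, the family `(n,l) ↦ c(n,l)·exp(2πi(nτ+lz))` is summable
with sum `φ(τ,z)`. -/
def IsFourierCoeffs (φ : ℂ → ℂ → ℂ) (c : ℤ → ℤ → ℂ) : Prop :=
  ∀ τ z : ℂ, 0 < τ.im →
    HasSum (fun p : ℤ × ℤ =>
      c p.1 p.2 * Complex.exp (2 * Real.pi * Complex.I * (p.1 * τ + p.2 * z))) (φ τ z)

/-- Generating-function identity: the averaged sum of specializations
`(1/b)·∑_{j=0}^{b−1} exp(2πi·t·n_b²·τ/b²)·φ(τ, (n_b τ + j)/b)·exp(−2πi·k·j/b)`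
equals the (summable) sum over pairs `(n,l)` with `l ≡ k (mod b)` of
`c(n,l)·exp(2πi(n + n_b l/b + t n_b²/b²)τ)`. -/
theorem generating_function_identity (t : ℤ) (ht : 1 ≤ t) (b : ℕ) (hb : 1 ≤ b)
    (φ : ℂ → ℂ → ℂ) (c : ℤ → ℤ → ℂ) (hc : IsFourierCoeffs φ c)
    (nb k : ℤ) (hnb : 0 ≤ nb ∧ nb ≤ (b : ℤ) - 1) :
    ∀ τ : ℂ, 0 < τ.im →
      HasSum (fun p : {q : ℤ × ℤ // (b : ℤ) ∣ q.2 - k} =>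
          c p.1.1 p.1.2 *
            Complex.exp (2 * Real.pi * Complex.I *
              ((p.1.1 : ℂ) + nb * p.1.2 / b + t * nb ^ 2 / (b : ℂ) ^ 2) * τ))
        ((1 / (b : ℂ)) * ∑ j ∈ Finset.range b,
          Complex.exp (2 * Real.pi * Complex.I * t * nb ^ 2 * τ / (b : ℂ) ^ 2) *
            φ τ ((nb * τ + j) / b) *
            Complex.exp (-(2 * Real.pi * Complex.I * k * j) / b)) := by
  intro τ hτ
  have hb0 : (b : ℂ) ≠ 0 := Nat.cast_ne_zero.2 (by omega)
  set e : ℂ := 2 * Real.pi * Complex.I with he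
  have hpi : (2 * (Real.pi : ℂ) * Complex.I) ≠ 0 := by
    simp [Real.pi_ne_zero, Complex.I_ne_zero, Complex.ofReal_ne_zero]
  -- orthogonality of roots of unity
  have ortho : ∀ m : ℤ, (∑ j ∈ Finset.range b, Complex.exp (e * m * j / b))
      = if (b : ℤ) ∣ m then (b : ℂ) else 0 := by
    intro m
    have hz : ∀ j : ℕ, Complex.exp (e * m * j / b) = Complex.exp (e * m / b) ^ j := by
      intro j
      rw [← Complex.exp_nat_mul]
      congr 1; push_cast; ring
    simp_rw [hz]
    by_cases hd : (b : ℤ) ∣ m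
    · have h1 : Complex.exp (e * m / b) = 1 := by
        obtain ⟨d, rfl⟩ := hd
        have : (e * (((b : ℤ) * d : ℤ) : ℂ)) / b = (d : ℂ) * (2 * Real.pi * Complex.I) := by
          push_cast
          rw [he]
          field_simp
        rw [this, Complex.exp_int_mul_two_pi_mul_I]
      rw [if_pos hd]
      simp [h1]
    · have hzeta : Complex.exp (e * m / b) ≠ 1 := by
        intro h
        rw [Complex.exp_eq_one_iff] at h
        obtain ⟨n, hn⟩ := h
        apply hd
        have h2 : (m : ℂ) = (n : ℂ) * b := by
          apply mul_left_cancel₀ hpi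
          rw [he] at hn
          field_simp at hn
          linear_combination (2 * (Real.pi : ℂ) * Complex.I) * hn
        have h3 : m = n * b := by exact_mod_cast h2
        exact ⟨n, by rw [h3, mul_comm]⟩
      rw [geom_sum_eq hzeta]
      have hpow : Complex.exp (e * m / b) ^ b = 1 := by
        rw [← Complex.exp_nat_mul]
        have : (b : ℂ) * (e * m / b) = (m : ℂ) * (2 * Real.pi * Complex.I) := by
          rw [he]; field_simp
        rw [this, Complex.exp_int_mul_two_pi_mul_I]
      rw [if_neg hd, hpow]
      simp
  set f : ℤ × ℤ → ℂ := fun p =>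
    c p.1 p.2 * Complex.exp (e * ((p.1 : ℂ) + nb * p.2 / b + t * nb ^ 2 / (b : ℂ) ^ 2) * τ)
    with hf
  have h1 : ∀ j ∈ Finset.range b, HasSum (fun p : ℤ × ℤ =>
      Complex.exp (e * t * nb ^ 2 * τ / (b : ℂ) ^ 2) *
        (c p.1 p.2 * Complex.exp (e * (p.1 * τ + p.2 * ((nb * τ + j) / b)))) *
        Complex.exp (-(e * k * j) / b))
      (Complex.exp (e * t * nb ^ 2 * τ / (b : ℂ) ^ 2) * φ τ ((nb * τ + j) / b) *
        Complex.exp (-(e * k * j) / b)) := by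
    intro j _
    exact ((hc τ ((nb * τ + j) / b) hτ).mul_left _).mul_right _
  have h2 := (hasSum_sum h1).mul_left (1 / (b : ℂ))
  have key : ∀ p : ℤ × ℤ,
      (1 / (b : ℂ)) * ∑ j ∈ Finset.range b,
        Complex.exp (e * t * nb ^ 2 * τ / (b : ℂ) ^ 2) *
          (c p.1 p.2 * Complex.exp (e * (p.1 * τ + p.2 * ((nb * τ + j) / b)))) *
          Complex.exp (-(e * k * j) / b)
      = Set.indicator {q : ℤ × ℤ | (b : ℤ) ∣ q.2 - k} f p := by
    intro p
    have hterm : ∀ j : ℕ,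
        Complex.exp (e * t * nb ^ 2 * τ / (b : ℂ) ^ 2) *
          (c p.1 p.2 * Complex.exp (e * (p.1 * τ + p.2 * ((nb * τ + j) / b)))) *
          Complex.exp (-(e * k * j) / b)
        = f p * Complex.exp (e * ((p.2 : ℤ) - k : ℤ) * j / b) := by
      intro j
      rw [hf]
      rw [show (Complex.exp (e * t * nb ^ 2 * τ / (b : ℂ) ^ 2) *
          (c p.1 p.2 * Complex.exp (e * (p.1 * τ + p.2 * ((nb * τ + j) / b)))) *
          Complex.exp (-(e * k * j) / b)) =
          c p.1 p.2 * Complex.exp (e * t * nb ^ 2 * τ / (b : ℂ) ^ 2 +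
            e * (p.1 * τ + p.2 * ((nb * τ + j) / b)) + -(e * k * j) / b) by
        rw [Complex.exp_add, Complex.exp_add]; ring]
      rw [show (c p.1 p.2 * Complex.exp (e * ((p.1 : ℂ) + nb * p.2 / b + t * nb ^ 2 / (b : ℂ) ^ 2) * τ) *
          Complex.exp (e * ((p.2 : ℤ) - k : ℤ) * j / b)) =
          c p.1 p.2 * Complex.exp (e * ((p.1 : ℂ) + nb * p.2 / b + t * nb ^ 2 / (b : ℂ) ^ 2) * τ +
            e * ((p.2 : ℤ) - k : ℤ) * j / b) by rw [Complex.exp_add]; ring]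
      congr 1
      push_cast
      field_simp
      ring
    simp_rw [hterm, ← Finset.mul_sum, ortho (p.2 - k)]
    by_cases hd : (b : ℤ) ∣ p.2 - k
    · rw [if_pos hd, Set.indicator_of_mem (show p ∈ {q : ℤ × ℤ | (b : ℤ) ∣ q.2 - k} from hd)]
      field_simp
    · rw [if_neg hd, Set.indicator_of_notMem (show p ∉ {q : ℤ × ℤ | (b : ℤ) ∣ q.2 - k} from hd)]
      ring
  rw [funext key] at h2
  exact hasSum_subtype_iff_indicator.2 h2
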